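/- Let Ω ⊂ C be a bounded domain, let h be continuous on the closure of the partial Schottky double Ω̂ = Ω ∪ Γ ∪ Ω̃ (Γ ⊂ ∂Ω an arc, Ω̃ the reflected copy with z ↔ z̃), harmonic on Ω ∪ Ω̃. Write h_e(z) = (h(z)+h(z̃))/2 and h_o(z) = (h(z)−h(z̃))/2. Suppose μ is a positive measure compactly supported in Ω such that ∫_Ω g dλ = ∫ g dμ for every g continuous on cl(Ω), harmonic on Ω, vanishing on Γ. Then ∫_Ω h dλ − ∫_{Ω̃} h dλ = ∫ h dμ − ∫ h dμ̃, where μ̃ is the reflection of μ. -/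

import Mathlib

open MeasureTheory Set Complex
noncomputable section

/-- The Wirtinger derivative ∂̄f = (∂f/∂x + i ∂f/∂y)/2 of a function f : ℂ → ℂ. -/
def dbar (f : ℂ → ℂ) (z : ℂ) : ℂ :=
  (fderiv ℝ f z 1 + Complex.I * fderiv ℝ f z Complex.I) / 2

/-- The Wirtinger derivative ∂f = (∂f/∂x − i ∂f/∂y)/2 of a function f : ℂ → ℂ. -/
def dz (f : ℂ → ℂ) (z : ℂ) : ℂ :=
  (fderiv ℝ f z 1 - Complex.I * fderiv ℝ f z Complex.I) / 2

/-- The Wirtinger derivative ∂u for a real-valued u : ℂ → ℝ. -/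
def dzR (u : ℂ → ℝ) (z : ℂ) : ℂ :=
  ((fderiv ℝ u z 1 : ℝ) - Complex.I * (fderiv ℝ u z Complex.I : ℝ)) / 2

/-- A set has piecewise C¹ boundary if its frontier is a finite union of C¹ curves. -/
def PiecewiseC1Boundary (D : Set ℂ) : Prop :=
  ∃ (m : ℕ) (γ : Fin m → ℝ → ℂ), (∀ i, ContDiffOn ℝ 1 (γ i) (Set.Icc 0 1)) ∧
    frontier D = ⋃ i, γ i '' Set.Icc (0:ℝ) 1

/-- Definition 4.1: a two-phase Schwarz function for the pair (D₊, D₋) with weights β₊, β₋. -/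
def TwoPhaseSchwarz (bp bm : ℝ) (Dp Dm : Set ℂ) (Sp Sm : ℂ → ℂ) : Prop :=
  ∃ Cp Cm : Set ℂ, IsCompact Cp ∧ Cp ⊆ Dp ∧ IsCompact Cm ∧ Cm ⊆ Dm ∧
    ContinuousOn Sp (closure Dp) ∧ ContinuousOn Sm (closure Dm) ∧
    DifferentiableOn ℂ Sp (Dp \ Cp) ∧ DifferentiableOn ℂ Sm (Dm \ Cm) ∧
    (∀ z ∈ frontier Dp \ (frontier Dp ∩ frontier Dm), Sp z = (bp : ℂ) * (starRingEnd ℂ) z) ∧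
    (∀ z ∈ frontier Dm \ (frontier Dp ∩ frontier Dm), Sm z = -(bm : ℂ) * (starRingEnd ℂ) z) ∧
    (∀ z ∈ frontier Dp ∩ frontier Dm, Sp z - Sm z = ((bp : ℂ) + (bm : ℂ)) * (starRingEnd ℂ) z)

/-- The logarithmic potential kernel, normalized so that −Δ Uμ = μ. -/
def logKernel (z w : ℂ) : ℝ := -Real.log ‖z - w‖ / (2 * Real.pi)

/-- The Laplacian of a function u : ℂ → ℝ. -/
def lapC (u : ℂ → ℝ) (z : ℂ) : ℝ :=
  fderiv ℝ (fun v => fderiv ℝ u v 1) z 1 +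
    fderiv ℝ (fun v => fderiv ℝ u v Complex.I) z Complex.I

/-- Harmonicity of u : ℂ → ℝ on an open set. -/
def HarmonicOnC (u : ℂ → ℝ) (U : Set ℂ) : Prop :=
  ContDiffOn ℝ 2 u U ∧ ∀ z ∈ U, lapC u z = 0

lemma conj_image_eq_preimage (Ω : Set ℂ) :
    (starRingEnd ℂ) '' Ω = (starRingEnd ℂ) ⁻¹' Ω := by
  ext z
  constructor
  · rintro ⟨w, hw, rfl⟩; simpa using hw
  · intro hz; exact ⟨(starRingEnd ℂ) z, hz, by simp⟩

lemma eventually_fderiv_comp_conj {h : ℂ → ℝ} {U : Set ℂ} (hU : IsOpen U)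
    (hh : ContDiffOn ℝ 2 h U) {z : ℂ} (hz : (starRingEnd ℂ) z ∈ U) :
    ∀ᶠ v in nhds z, fderiv ℝ (fun w => h ((starRingEnd ℂ) w)) v
      = (fderiv ℝ h ((starRingEnd ℂ) v)).comp (Complex.conjCLE : ℂ →L[ℝ] ℂ) := by
  have hV : IsOpen ((starRingEnd ℂ) ⁻¹' U) := hU.preimage Complex.continuous_conj
  filter_upwards [hV.mem_nhds hz] with v hv
  have hd : DifferentiableAt ℝ h ((starRingEnd ℂ) v) :=
    (hh.contDiffAt (hU.mem_nhds hv)).differentiableAt two_ne_zero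
  have heq : (fun w => h ((starRingEnd ℂ) w)) = h ∘ (Complex.conjCLE : ℂ → ℂ) := by
    funext w; simp [Complex.conjCLE_apply]
  have hd' : DifferentiableAt ℝ h ((Complex.conjCLE : ℂ → ℂ) v) := by
    simpa [Complex.conjCLE_apply] using hd
  rw [heq, fderiv_comp v hd' Complex.conjCLE.differentiableAt, Complex.conjCLE.fderiv]
  simp [Complex.conjCLE_apply]

lemma lapC_comp_conj {h : ℂ → ℝ} {U : Set ℂ} (hU : IsOpen U)
    (hh : ContDiffOn ℝ 2 h U) {z : ℂ} (hz : (starRingEnd ℂ) z ∈ U) :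
    lapC (fun w => h ((starRingEnd ℂ) w)) z = lapC h ((starRingEnd ℂ) z) := by
  have hF : ContDiffAt ℝ 1 (fderiv ℝ h) ((starRingEnd ℂ) z) :=
    (hh.contDiffAt (hU.mem_nhds hz)).fderiv_right (by norm_num : (1:WithTop ℕ∞) + 1 ≤ 2)
  have hFd : DifferentiableAt ℝ (fderiv ℝ h) ((starRingEnd ℂ) z) := hF.differentiableAt one_ne_zero
  have hev := eventually_fderiv_comp_conj hU hh hz
  have key : ∀ a : ℂ, fderiv ℝ (fun v => fderiv ℝ (fun w => h ((starRingEnd ℂ) w)) v a) z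
      = (fderiv ℝ (fun w => fderiv ℝ h w ((starRingEnd ℂ) a)) ((starRingEnd ℂ) z)).comp
          (Complex.conjCLE : ℂ →L[ℝ] ℂ) := by
    intro a
    have h1 : (fun v => fderiv ℝ (fun w => h ((starRingEnd ℂ) w)) v a)
        =ᶠ[nhds z] (fun v => fderiv ℝ h ((starRingEnd ℂ) v) ((starRingEnd ℂ) a)) :=
      hev.mono fun v hv => by
        have := congrArg (fun L : ℂ →L[ℝ] ℝ => L a) hv
        simpa [Complex.conjCLE_apply] using this
    rw [h1.fderiv_eq]
    have h2 : (fun v => fderiv ℝ h ((starRingEnd ℂ) v) ((starRingEnd ℂ) a))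
        = (fun w => fderiv ℝ h w ((starRingEnd ℂ) a)) ∘ (Complex.conjCLE : ℂ → ℂ) := by
      funext v; simp [Complex.conjCLE_apply]
    have hod : DifferentiableAt ℝ (fun w => fderiv ℝ h w ((starRingEnd ℂ) a))
        ((Complex.conjCLE : ℂ → ℂ) z) := by
      simpa [Complex.conjCLE_apply] using hFd.clm_apply (differentiableAt_const _)
    rw [h2, fderiv_comp z hod Complex.conjCLE.differentiableAt, Complex.conjCLE.fderiv]
    simp [Complex.conjCLE_apply]
  have k1 := congrArg (fun L => L (1:ℂ)) (key 1)
  have kI := congrArg (fun L => L Complex.I) (key Complex.I)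
  simp only [ContinuousLinearMap.comp_apply, ContinuousLinearEquiv.coe_coe,
    Complex.conjCLE_apply, map_one, Complex.conj_I] at k1 kI
  have hneg : (fun w => fderiv ℝ h w (-Complex.I)) = fun w => -(fderiv ℝ h w Complex.I) := by
    funext w; simp
  rw [hneg, fderiv_fun_neg] at kI
  simp only [ContinuousLinearMap.neg_apply, map_neg, neg_neg] at kI
  simp only [lapC, k1, kI]

lemma lapC_sub {u v : ℂ → ℝ} {z : ℂ} (hu : ContDiffAt ℝ 2 u z) (hv : ContDiffAt ℝ 2 v z) :
    lapC (fun w => u w - v w) z = lapC u z - lapC v z := by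
  have hud : ∀ᶠ w in nhds z, DifferentiableAt ℝ u w :=
    (hu.eventually (by norm_num)).mono fun w hw => hw.differentiableAt two_ne_zero
  have hvd : ∀ᶠ w in nhds z, DifferentiableAt ℝ v w :=
    (hv.eventually (by norm_num)).mono fun w hw => hw.differentiableAt two_ne_zero
  have hFu : DifferentiableAt ℝ (fderiv ℝ u) z :=
    (hu.fderiv_right (by norm_num : (1:WithTop ℕ∞) + 1 ≤ 2)).differentiableAt one_ne_zero
  have hFv : DifferentiableAt ℝ (fderiv ℝ v) z :=
    (hv.fderiv_right (by norm_num : (1:WithTop ℕ∞) + 1 ≤ 2)).differentiableAt one_ne_zero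
  have key : ∀ a : ℂ, fderiv ℝ (fun w => fderiv ℝ (fun y => u y - v y) w a) z a
      = fderiv ℝ (fun w => fderiv ℝ u w a) z a - fderiv ℝ (fun w => fderiv ℝ v w a) z a := by
    intro a
    have h1 : (fun w => fderiv ℝ (fun y => u y - v y) w a)
        =ᶠ[nhds z] (fun w => fderiv ℝ u w a - fderiv ℝ v w a) := by
      filter_upwards [hud, hvd] with w h1 h2
      rw [fderiv_fun_sub h1 h2]; rfl
    rw [h1.fderiv_eq, fderiv_fun_sub (hFu.clm_apply (differentiableAt_const _))
      (hFv.clm_apply (differentiableAt_const _))]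
    rfl
  simp only [lapC, key]
  ring

/-- Two-phase quadrature identity via the Schottky double (modelled by reflection in ℝ):
if Ω is a one-phase quadrature domain for harmonic functions vanishing on the arc Γ ⊆ ∂Ω ∩ ℝ
with respect to μ, then (Ω, Ω̃) with Ω̃ = conj(Ω) satisfies the two-phase quadrature identity
with respect to (μ, μ̃) for all h harmonic on Ω ∪ Ω̃ and continuous up to the closure. -/
theorem statement_14 (Ω : Set ℂ) (hΩo : IsOpen Ω) (hΩc : IsConnected Ω)
    (hΩb : Bornology.IsBounded Ω) (hΩup : Ω ⊆ {z : ℂ | 0 < z.im})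
    (Γ : Set ℂ) (hΓ : Γ ⊆ frontier Ω ∩ {z : ℂ | z.im = 0})
    (h : ℂ → ℝ)
    (hhc : ContinuousOn h (closure (Ω ∪ Γ ∪ (starRingEnd ℂ) '' Ω)))
    (hhh : HarmonicOnC h (Ω ∪ (starRingEnd ℂ) '' Ω))
    (μ : Measure ℂ) (hμ : IsFiniteMeasure μ)
    (C : Set ℂ) (hC : IsCompact C) (hCΩ : C ⊆ Ω) (hμs : μ Cᶜ = 0)
    (hquad : ∀ g : ℂ → ℝ, ContinuousOn g (closure Ω) → HarmonicOnC g Ω →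
      (∀ z ∈ Γ, g z = 0) → IntegrableOn g Ω volume → Integrable g μ →
      ∫ z in Ω, g z = ∫ z, g z ∂μ)
    (hint1 : IntegrableOn h Ω volume)
    (hint2 : IntegrableOn h ((starRingEnd ℂ) '' Ω) volume)
    (hint3 : Integrable h μ) (hint4 : Integrable (fun z => h ((starRingEnd ℂ) z)) μ) :
    (∫ z in Ω, h z) - ∫ z in (starRingEnd ℂ) '' Ω, h z
      = (∫ z, h z ∂μ) - ∫ z, h ((starRingEnd ℂ) z) ∂μ := by
  have hcoe : ⇑Complex.conjLIE = fun z : ℂ => (starRingEnd ℂ) z :=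
    funext fun z => Complex.conjLIE_apply z
  have mp : MeasurePreserving (fun z : ℂ => (starRingEnd ℂ) z)
      (volume : Measure ℂ) volume := by
    rw [← hcoe]; exact Complex.conjLIE.measurePreserving
  have emb : MeasurableEmbedding (fun z : ℂ => (starRingEnd ℂ) z) := by
    rw [← hcoe]; exact Complex.conjLIE.toHomeomorph.measurableEmbedding
  have himg : ∫ z in (starRingEnd ℂ) '' Ω, h z = ∫ z in Ω, h ((starRingEnd ℂ) z) :=
    mp.setIntegral_image_emb emb h Ω
  have hint2' : IntegrableOn (fun z => h ((starRingEnd ℂ) z)) Ω volume := by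
    have := ((mp.restrict_image_emb emb Ω).integrable_comp_emb emb (g := h)).mpr hint2
    exact this
  -- the open set on which h is harmonic
  have himgopen : IsOpen ((starRingEnd ℂ) '' Ω) := by
    rw [conj_image_eq_preimage]; exact hΩo.preimage Complex.continuous_conj
  have hU : IsOpen (Ω ∪ (starRingEnd ℂ) '' Ω) := hΩo.union himgopen
  have hcsm : ContDiff ℝ 2 (fun z : ℂ => (starRingEnd ℂ) z) := by
    have := (Complex.conjCLE : ℂ →L[ℝ] ℂ).contDiff (n := 2)
    exact this
  -- the odd part (times two)
  set g : ℂ → ℝ := fun z => h z - h ((starRingEnd ℂ) z) with hg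
  have hsub1 : closure Ω ⊆ closure (Ω ∪ Γ ∪ (starRingEnd ℂ) '' Ω) :=
    closure_mono fun z hz => Or.inl (Or.inl hz)
  have hmaps : MapsTo (fun z : ℂ => (starRingEnd ℂ) z) (closure Ω)
      (closure (Ω ∪ Γ ∪ (starRingEnd ℂ) '' Ω)) := by
    intro z hz
    have h1 : (starRingEnd ℂ) z ∈ (fun z : ℂ => (starRingEnd ℂ) z) '' closure Ω :=
      ⟨z, hz, rfl⟩
    have h2 : (fun z : ℂ => (starRingEnd ℂ) z) '' closure Ω ⊆ closure ((starRingEnd ℂ) '' Ω) :=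
      image_closure_subset_closure_image Complex.continuous_conj
    exact closure_mono (fun w hw => Or.inr hw) (h2 h1)
  have hgc : ContinuousOn g (closure Ω) := by
    refine ContinuousOn.sub (hhc.mono hsub1) ?_
    exact hhc.comp (Complex.continuous_conj.continuousOn) hmaps
  have hmem2 : ∀ z ∈ Ω, (starRingEnd ℂ) z ∈ Ω ∪ (starRingEnd ℂ) '' Ω :=
    fun z hz => Or.inr ⟨z, hz, rfl⟩
  have hgh : HarmonicOnC g Ω := by
    constructor
    · refine ContDiffOn.sub (hhh.1.mono subset_union_left) ?_
      exact hhh.1.comp hcsm.contDiffOn fun z hz => hmem2 z hz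
    · intro z hz
      have cu : ContDiffAt ℝ 2 h z := hhh.1.contDiffAt (hU.mem_nhds (Or.inl hz))
      have cv : ContDiffAt ℝ 2 (fun w => h ((starRingEnd ℂ) w)) z :=
        (hhh.1.contDiffAt (hU.mem_nhds (hmem2 z hz))).comp z hcsm.contDiffAt
      rw [hg]
      rw [lapC_sub cu cv, lapC_comp_conj hU hhh.1 (hmem2 z hz),
        hhh.2 z (Or.inl hz), hhh.2 _ (hmem2 z hz), sub_zero]
  have hgΓ : ∀ z ∈ Γ, g z = 0 := by
    intro z hz
    have him : z.im = 0 := (hΓ hz).2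
    have : (starRingEnd ℂ) z = z := Complex.conj_eq_iff_im.mpr him
    simp [hg, this]
  have hq := hquad g hgc hgh hgΓ (hint1.sub hint2') (hint3.sub hint4)
  have e1 : ∫ z in Ω, g z
      = (∫ z in Ω, h z) - ∫ z in Ω, h ((starRingEnd ℂ) z) := integral_sub hint1 hint2'
  have e2 : ∫ z, g z ∂μ
      = (∫ z, h z ∂μ) - ∫ z, h ((starRingEnd ℂ) z) ∂μ := integral_sub hint3 hint4
  rw [himg]
  rw [e1, e2] at hq
  linarith
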